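/- Let q : Fin 16 × Fin 4 → ℝ be nonnegative with total sum 1 (proportions of the 64 potential-outcome types (Y_{00},Y_{01},Y_{10},Y_{11},S_0,S_1) in the non-strong surrogate case). Define γ₁ = Σ_j Σ_{i: Y_{11}(i)=1, Y_{10}(i)=0} q(i,j) − Σ_j Σ_{i: Y_{10}(i)=1, Y_{11}(i)=0} q(i,j), ACE = P(Y_{1,S_1}=1) − P(Y_{0,S_0}=1) expressed as the corresponding linear combination of q, pY = P(Y_{0,S_0}=1) (= P(Y=1|T=0)), and e = P(S_1=0) (= P(S=0|T=1)). Then max(−pY, −γ₁ − pY − (1−e), γ₁ − pY − e) ≤ ACE ≤ min(1−pY, −γ₁ + (1−pY) + (1−e), γ₁ + (1−pY) + e). -/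
import Mathlib


/- Non-strong surrogate potential-outcome-type model: `q (i, j)` is the proportion of the
type with `(Y₀₀, Y₀₁, Y₁₀, Y₁₁)` given by the binary expansion of `i` (most significant
bit first) and `(S₀, S₁)` given by the binary expansion of `j`. -/

/-- Indicator of `Y₀₀ = 1` for type `i`. -/
def y00 (i : Fin 16) : ℝ := if i.val / 8 = 1 then 1 else 0
/-- Indicator of `Y₀₁ = 1` for type `i`. -/
def y01 (i : Fin 16) : ℝ := if i.val / 4 % 2 = 1 then 1 else 0
/-- Indicator of `Y₁₀ = 1` for type `i`. -/
def y10 (i : Fin 16) : ℝ := if i.val / 2 % 2 = 1 then 1 else 0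
/-- Indicator of `Y₁₁ = 1` for type `i`. -/
def y11 (i : Fin 16) : ℝ := if i.val % 2 = 1 then 1 else 0
/-- Indicator of `S₀ = 1` for type `j`. -/
def s0 (j : Fin 4) : ℝ := if j.val / 2 = 1 then 1 else 0
/-- Indicator of `S₁ = 1` for type `j`. -/
def s1 (j : Fin 4) : ℝ := if j.val % 2 = 1 then 1 else 0

/-- `γ₁ = P(Y₁₁ = 1) - P(Y₁₀ = 1)`, the effect of `S` on `Y` under `T = 1`. -/
noncomputable def gamma1 (q : Fin 16 × Fin 4 → ℝ) : ℝ :=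
  ∑ i : Fin 16, ∑ j : Fin 4, (y11 i - y10 i) * q (i, j)

/-- `P(Y=1 | T=0) = P(Y_{0,S₀} = 1)`. -/
noncomputable def pY0 (q : Fin 16 × Fin 4 → ℝ) : ℝ :=
  ∑ i : Fin 16, ∑ j : Fin 4, ((1 - s0 j) * y00 i + s0 j * y01 i) * q (i, j)

/-- `P(Y=1 | T=1) = P(Y_{1,S₁} = 1)`. -/
noncomputable def pY1 (q : Fin 16 × Fin 4 → ℝ) : ℝ :=
  ∑ i : Fin 16, ∑ j : Fin 4, ((1 - s1 j) * y10 i + s1 j * y11 i) * q (i, j)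

/-- `ACE(T → Y)`. -/
noncomputable def aceTY (q : Fin 16 × Fin 4 → ℝ) : ℝ := pY1 q - pY0 q

/-- `P(S=0 | T=1) = P(S₁ = 0)`. -/
noncomputable def pS0T1 (q : Fin 16 × Fin 4 → ℝ) : ℝ :=
  ∑ i : Fin 16, ∑ j : Fin 4, (1 - s1 j) * q (i, j)

/-- `ACE(T → S) = P(S₁ = 1) - P(S₀ = 1)`. -/
noncomputable def aceTS (q : Fin 16 × Fin 4 → ℝ) : ℝ :=
  ∑ i : Fin 16, ∑ j : Fin 4, (s1 j - s0 j) * q (i, j)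

lemma sum4 (f : Fin 4 → ℝ) : ∑ j, f j = f 0 + f 1 + f 2 + f 3 := by
  simp only [Fin.sum_univ_succ, Fin.sum_univ_zero, add_zero, ← add_assoc]
  rfl

lemma sum16 (f : Fin 16 → ℝ) : ∑ i, f i = f 0 + f 1 + f 2 + f 3 + f 4 + f 5 + f 6 + f 7
    + f 8 + f 9 + f 10 + f 11 + f 12 + f 13 + f 14 + f 15 := by
  simp only [Fin.sum_univ_succ, Fin.sum_univ_zero, add_zero, ← add_assoc]
  rfl

lemma y00_0 : y00 0 = 0 := by simp only [y00]; norm_num [show ((0:Fin 16)).val = 0 from rfl]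
lemma y00_1 : y00 1 = 0 := by simp only [y00]; norm_num [show ((1:Fin 16)).val = 1 from rfl]
lemma y00_2 : y00 2 = 0 := by simp only [y00]; norm_num [show ((2:Fin 16)).val = 2 from rfl]
lemma y00_3 : y00 3 = 0 := by simp only [y00]; norm_num [show ((3:Fin 16)).val = 3 from rfl]
lemma y00_4 : y00 4 = 0 := by simp only [y00]; norm_num [show ((4:Fin 16)).val = 4 from rfl]
lemma y00_5 : y00 5 = 0 := by simp only [y00]; norm_num [show ((5:Fin 16)).val = 5 from rfl]
lemma y00_6 : y00 6 = 0 := by simp only [y00]; norm_num [show ((6:Fin 16)).val = 6 from rfl]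
lemma y00_7 : y00 7 = 0 := by simp only [y00]; norm_num [show ((7:Fin 16)).val = 7 from rfl]
lemma y00_8 : y00 8 = 1 := by simp only [y00]; norm_num [show ((8:Fin 16)).val = 8 from rfl]
lemma y00_9 : y00 9 = 1 := by simp only [y00]; norm_num [show ((9:Fin 16)).val = 9 from rfl]
lemma y00_10 : y00 10 = 1 := by simp only [y00]; norm_num [show ((10:Fin 16)).val = 10 from rfl]
lemma y00_11 : y00 11 = 1 := by simp only [y00]; norm_num [show ((11:Fin 16)).val = 11 from rfl]
lemma y00_12 : y00 12 = 1 := by simp only [y00]; norm_num [show ((12:Fin 16)).val = 12 from rfl]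
lemma y00_13 : y00 13 = 1 := by simp only [y00]; norm_num [show ((13:Fin 16)).val = 13 from rfl]
lemma y00_14 : y00 14 = 1 := by simp only [y00]; norm_num [show ((14:Fin 16)).val = 14 from rfl]
lemma y00_15 : y00 15 = 1 := by simp only [y00]; norm_num [show ((15:Fin 16)).val = 15 from rfl]
lemma y01_0 : y01 0 = 0 := by simp only [y01]; norm_num [show ((0:Fin 16)).val = 0 from rfl]
lemma y01_1 : y01 1 = 0 := by simp only [y01]; norm_num [show ((1:Fin 16)).val = 1 from rfl]
lemma y01_2 : y01 2 = 0 := by simp only [y01]; norm_num [show ((2:Fin 16)).val = 2 from rfl]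
lemma y01_3 : y01 3 = 0 := by simp only [y01]; norm_num [show ((3:Fin 16)).val = 3 from rfl]
lemma y01_4 : y01 4 = 1 := by simp only [y01]; norm_num [show ((4:Fin 16)).val = 4 from rfl]
lemma y01_5 : y01 5 = 1 := by simp only [y01]; norm_num [show ((5:Fin 16)).val = 5 from rfl]
lemma y01_6 : y01 6 = 1 := by simp only [y01]; norm_num [show ((6:Fin 16)).val = 6 from rfl]
lemma y01_7 : y01 7 = 1 := by simp only [y01]; norm_num [show ((7:Fin 16)).val = 7 from rfl]
lemma y01_8 : y01 8 = 0 := by simp only [y01]; norm_num [show ((8:Fin 16)).val = 8 from rfl]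
lemma y01_9 : y01 9 = 0 := by simp only [y01]; norm_num [show ((9:Fin 16)).val = 9 from rfl]
lemma y01_10 : y01 10 = 0 := by simp only [y01]; norm_num [show ((10:Fin 16)).val = 10 from rfl]
lemma y01_11 : y01 11 = 0 := by simp only [y01]; norm_num [show ((11:Fin 16)).val = 11 from rfl]
lemma y01_12 : y01 12 = 1 := by simp only [y01]; norm_num [show ((12:Fin 16)).val = 12 from rfl]
lemma y01_13 : y01 13 = 1 := by simp only [y01]; norm_num [show ((13:Fin 16)).val = 13 from rfl]
lemma y01_14 : y01 14 = 1 := by simp only [y01]; norm_num [show ((14:Fin 16)).val = 14 from rfl]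
lemma y01_15 : y01 15 = 1 := by simp only [y01]; norm_num [show ((15:Fin 16)).val = 15 from rfl]
lemma y10_0 : y10 0 = 0 := by simp only [y10]; norm_num [show ((0:Fin 16)).val = 0 from rfl]
lemma y10_1 : y10 1 = 0 := by simp only [y10]; norm_num [show ((1:Fin 16)).val = 1 from rfl]
lemma y10_2 : y10 2 = 1 := by simp only [y10]; norm_num [show ((2:Fin 16)).val = 2 from rfl]
lemma y10_3 : y10 3 = 1 := by simp only [y10]; norm_num [show ((3:Fin 16)).val = 3 from rfl]
lemma y10_4 : y10 4 = 0 := by simp only [y10]; norm_num [show ((4:Fin 16)).val = 4 from rfl]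
lemma y10_5 : y10 5 = 0 := by simp only [y10]; norm_num [show ((5:Fin 16)).val = 5 from rfl]
lemma y10_6 : y10 6 = 1 := by simp only [y10]; norm_num [show ((6:Fin 16)).val = 6 from rfl]
lemma y10_7 : y10 7 = 1 := by simp only [y10]; norm_num [show ((7:Fin 16)).val = 7 from rfl]
lemma y10_8 : y10 8 = 0 := by simp only [y10]; norm_num [show ((8:Fin 16)).val = 8 from rfl]
lemma y10_9 : y10 9 = 0 := by simp only [y10]; norm_num [show ((9:Fin 16)).val = 9 from rfl]
lemma y10_10 : y10 10 = 1 := by simp only [y10]; norm_num [show ((10:Fin 16)).val = 10 from rfl]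
lemma y10_11 : y10 11 = 1 := by simp only [y10]; norm_num [show ((11:Fin 16)).val = 11 from rfl]
lemma y10_12 : y10 12 = 0 := by simp only [y10]; norm_num [show ((12:Fin 16)).val = 12 from rfl]
lemma y10_13 : y10 13 = 0 := by simp only [y10]; norm_num [show ((13:Fin 16)).val = 13 from rfl]
lemma y10_14 : y10 14 = 1 := by simp only [y10]; norm_num [show ((14:Fin 16)).val = 14 from rfl]
lemma y10_15 : y10 15 = 1 := by simp only [y10]; norm_num [show ((15:Fin 16)).val = 15 from rfl]
lemma y11_0 : y11 0 = 0 := by simp only [y11]; norm_num [show ((0:Fin 16)).val = 0 from rfl]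
lemma y11_1 : y11 1 = 1 := by simp only [y11]; norm_num [show ((1:Fin 16)).val = 1 from rfl]
lemma y11_2 : y11 2 = 0 := by simp only [y11]; norm_num [show ((2:Fin 16)).val = 2 from rfl]
lemma y11_3 : y11 3 = 1 := by simp only [y11]; norm_num [show ((3:Fin 16)).val = 3 from rfl]
lemma y11_4 : y11 4 = 0 := by simp only [y11]; norm_num [show ((4:Fin 16)).val = 4 from rfl]
lemma y11_5 : y11 5 = 1 := by simp only [y11]; norm_num [show ((5:Fin 16)).val = 5 from rfl]
lemma y11_6 : y11 6 = 0 := by simp only [y11]; norm_num [show ((6:Fin 16)).val = 6 from rfl]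
lemma y11_7 : y11 7 = 1 := by simp only [y11]; norm_num [show ((7:Fin 16)).val = 7 from rfl]
lemma y11_8 : y11 8 = 0 := by simp only [y11]; norm_num [show ((8:Fin 16)).val = 8 from rfl]
lemma y11_9 : y11 9 = 1 := by simp only [y11]; norm_num [show ((9:Fin 16)).val = 9 from rfl]
lemma y11_10 : y11 10 = 0 := by simp only [y11]; norm_num [show ((10:Fin 16)).val = 10 from rfl]
lemma y11_11 : y11 11 = 1 := by simp only [y11]; norm_num [show ((11:Fin 16)).val = 11 from rfl]
lemma y11_12 : y11 12 = 0 := by simp only [y11]; norm_num [show ((12:Fin 16)).val = 12 from rfl]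
lemma y11_13 : y11 13 = 1 := by simp only [y11]; norm_num [show ((13:Fin 16)).val = 13 from rfl]
lemma y11_14 : y11 14 = 0 := by simp only [y11]; norm_num [show ((14:Fin 16)).val = 14 from rfl]
lemma y11_15 : y11 15 = 1 := by simp only [y11]; norm_num [show ((15:Fin 16)).val = 15 from rfl]
lemma s0_0 : s0 0 = 0 := by simp only [s0]; norm_num [show ((0:Fin 4)).val = 0 from rfl]
lemma s0_1 : s0 1 = 0 := by simp only [s0]; norm_num [show ((1:Fin 4)).val = 1 from rfl]
lemma s0_2 : s0 2 = 1 := by simp only [s0]; norm_num [show ((2:Fin 4)).val = 2 from rfl]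
lemma s0_3 : s0 3 = 1 := by simp only [s0]; norm_num [show ((3:Fin 4)).val = 3 from rfl]
lemma s1_0 : s1 0 = 0 := by simp only [s1]; norm_num [show ((0:Fin 4)).val = 0 from rfl]
lemma s1_1 : s1 1 = 1 := by simp only [s1]; norm_num [show ((1:Fin 4)).val = 1 from rfl]
lemma s1_2 : s1 2 = 0 := by simp only [s1]; norm_num [show ((2:Fin 4)).val = 2 from rfl]
lemma s1_3 : s1 3 = 1 := by simp only [s1]; norm_num [show ((3:Fin 4)).val = 3 from rfl]

set_option maxHeartbeats 4000000 in
theorem stmt6 (q : Fin 16 × Fin 4 → ℝ) (hq : ∀ p, 0 ≤ q p)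
    (hsum : ∑ p : Fin 16 × Fin 4, q p = 1) :
    max (max (-pY0 q) (-gamma1 q - pY0 q - (1 - pS0T1 q))) (gamma1 q - pY0 q - pS0T1 q)
      ≤ aceTY q ∧
    aceTY q ≤
      min (min (1 - pY0 q) (-gamma1 q + (1 - pY0 q) + (1 - pS0T1 q)))
        (gamma1 q + (1 - pY0 q) + pS0T1 q) := by

  rw [Fintype.sum_prod_type] at hsum
  simp only [gamma1, aceTY, pY1, pY0, pS0T1, sum16, sum4, y00_0, y00_1, y00_2, y00_3, y00_4, y00_5, y00_6, y00_7, y00_8, y00_9, y00_10, y00_11, y00_12, y00_13, y00_14, y00_15, y01_0, y01_1, y01_2, y01_3, y01_4, y01_5, y01_6, y01_7, y01_8, y01_9, y01_10, y01_11, y01_12, y01_13, y01_14, y01_15, y10_0, y10_1, y10_2, y10_3, y10_4, y10_5, y10_6, y10_7, y10_8, y10_9, y10_10, y10_11, y10_12, y10_13, y10_14, y10_15, y11_0, y11_1, y11_2, y11_3, y11_4, y11_5, y11_6, y11_7, y11_8, y11_9, y11_10, y11_11, y11_12, y11_13, y11_14, y11_15, s0_0, s0_1, s0_2, s0_3, s1_0,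 s1_1, s1_2, s1_3] at hsum ⊢
  ring_nf at hsum ⊢
  refine ⟨max_le (max_le ?_ ?_) ?_, le_min (le_min ?_ ?_) ?_⟩ <;>
    linarith [hq (0,0), hq (0,1), hq (0,2), hq (0,3), hq (1,0), hq (1,1), hq (1,2), hq (1,3), hq (2,0), hq (2,1), hq (2,2), hq (2,3), hq (3,0), hq (3,1), hq (3,2), hq (3,3), hq (4,0), hq (4,1), hq (4,2), hq (4,3), hq (5,0), hq (5,1), hq (5,2), hq (5,3), hq (6,0), hq (6,1), hq (6,2), hq (6,3), hq (7,0), hq (7,1), hq (7,2), hq (7,3), hq (8,0), hq (8,1), hq (8,2), hq (8,3), hq (9,0), hq (9,1), hq (9,2), hq (9,3), hq (10,0), hq (10,1), hq (10,2), hq (10,3), hq (11,0), hq (11,1), hq (11,2), hq (11,3), hq (12,0), hq (12,1), hq (12,2), hq (12,3), hq (13,0), hq (13,1), hq (13,2), hq (13,3), hq (14,0), hq (14,1), hq (14,2), hq (14,3), hq (15,0), hq (15,1), hq (15,2), hq (15,3)]
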